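/- Let M be a compact Riemannian manifold, let (X_t)_t be a C^1 flow on M, and let (Y_s)_s be a C^1 flow belonging to the C^1-centralizer of (X_t)_t. Then for every s ∈ ℝ and every hyperbolic critical element p of (X_t)_t (hyperbolic singularity or hyperbolic periodic point), the diffeomorphism Y_s maps the orbit γ_p = {X_t(p) : t ∈ ℝ} onto itself: Y_s(γ_p) = γ_p. -/

import Mathlib

open Set Filter Topology Manifold Metric

noncomputable section

variable {E : Type*} [NormedAddCommGroup E] [NormedSpace ℝ E]
  {H : Type*} [TopologicalSpace H] {I : ModelWithCorners ℝ E H}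
  {M : Type*} [TopologicalSpace M] [ChartedSpace H M] [IsManifold I (⊤ : ℕ∞) M]

/-- A (global, jointly continuous) flow on `M`. -/
def IsFlow (φ : ℝ → M → M) : Prop :=
  Continuous (fun p : ℝ × M => φ p.1 p.2) ∧ (∀ x, φ 0 x = x) ∧
    ∀ s t x, φ (s + t) x = φ s (φ t x)

variable (I) in
/-- `φ` is the flow generated by the vector field `X` (we identify `TangentSpace I x` with `E`). -/
def IsFlowOf (X : M → E) (φ : ℝ → M → M) : Prop :=
  IsFlow φ ∧ ∀ x t, HasMFDerivAt (𝓘(ℝ, ℝ)) I (fun s => φ s x) t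
    (ContinuousLinearMap.smulRight (1 : ℝ →L[ℝ] ℝ) (X (φ t x) : TangentSpace I (φ t x)))

variable (I) in
/-- The Lie bracket of two vector fields on a manifold, computed in the chart at `x`. -/
def mLieBracket (X Y : M → E) (x : M) : E :=
  VectorField.lieBracketWithin ℝ
    (fun y => mfderiv I (𝓘(ℝ, E)) (extChartAt I x) ((extChartAt I x).symm y)
      (X ((extChartAt I x).symm y)))
    (fun y => mfderiv I (𝓘(ℝ, E)) (extChartAt I x) ((extChartAt I x).symm y)
      (Y ((extChartAt I x).symm y)))
    (extChartAt I x).target (extChartAt I x x)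

variable (I) in
/-- `X` is a vector field of class `C^r` on `M`. -/
def IsCrVectorField (r : ℕ∞) (X : M → E) : Prop :=
  ContMDiff I I.tangent r (fun x => (⟨x, X x⟩ : TangentBundle I M))


variable (I) in
/-- The canonical identification of a tangent vector with an element of the model space. -/
def tvec {x : M} (v : TangentSpace I x) : E := v

/-- The orbit of a point under a flow. -/
def flowOrbit (φ : ℝ → M → M) (p : M) : Set M := range fun t => φ t p

/-- A periodic (non-equilibrium) point of a flow. -/
def IsPeriodicPoint (φ : ℝ → M → M) (p : M) : Prop :=
  (∃ T > 0, φ T p = p) ∧ ¬ (∀ t, φ t p = p)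

/-- The flow `φ` is (topologically) transitive on the invariant set `Λ`: some point of `Λ`
has dense forward orbit in `Λ`. -/
def TransitiveOn (φ : ℝ → M → M) (Λ : Set M) : Prop :=
  ∃ x ∈ Λ, Λ ⊆ closure {y | ∃ t : ℝ, 0 ≤ t ∧ φ t x = y}

variable (I) in
/-- The orbit of `p` is a hyperbolic periodic orbit of the flow `φ` generated by `X`:
there is a `Dφ_t`-invariant splitting `T M = Eˢ ⊕ E⁰ ⊕ Eᵘ` along the orbit, with `E⁰`
spanned by `X`, uniformly exponentially contracted on `Eˢ` and expanded on `Eᵘ`. -/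
def IsHyperbolicPeriodicOrbit (X : M → E) (φ : ℝ → M → M) (p : M) : Prop :=
  IsPeriodicPoint φ p ∧
  ∃ (Es Eu : M → Submodule ℝ E) (C lam : ℝ), 0 < C ∧ lam ∈ Set.Ioo (0:ℝ) 1 ∧
    ∀ x ∈ flowOrbit φ p,
      (Es x ⊔ Eu x ⊔ Submodule.span ℝ {X x} = ⊤) ∧
      (Es x ⊓ (Eu x ⊔ Submodule.span ℝ {X x}) = ⊥) ∧
      (Eu x ⊓ (Es x ⊔ Submodule.span ℝ {X x}) = ⊥) ∧
      (Submodule.span ℝ {X x} ⊓ (Es x ⊔ Eu x) = ⊥) ∧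
      (∀ (t : ℝ) (v : E), v ∈ Es x → tvec I (mfderiv I I (φ t) x (v : TangentSpace I x)) ∈ Es (φ t x)) ∧
      (∀ (t : ℝ) (v : E), v ∈ Eu x → tvec I (mfderiv I I (φ t) x (v : TangentSpace I x)) ∈ Eu (φ t x)) ∧
      (∀ t : ℝ, 0 ≤ t → ∀ v ∈ Es x,
        ‖tvec I (mfderiv I I (φ t) x (v : TangentSpace I x))‖ ≤ C * lam ^ t * ‖v‖) ∧
      (∀ t : ℝ, 0 ≤ t → ∀ v ∈ Eu x,
        ‖v‖ ≤ C * lam ^ t * ‖tvec I (mfderiv I I (φ t) x (v : TangentSpace I x))‖)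

/-- Two flows commute: `Y_s ∘ X_t = X_t ∘ Y_s` for all `s, t`. -/
def FlowsCommute (φ ψ : ℝ → M → M) : Prop :=
  ∀ (s t : ℝ) (x : M), ψ s (φ t x) = φ t (ψ s x)

variable (I) in
/-- A `C^1` flow on `M`: a flow which is `C^1` jointly in time and space. -/
def IsC1Flow (φ : ℝ → M → M) : Prop :=
  IsFlow φ ∧ ContMDiff ((𝓘(ℝ, ℝ)).prod I) I 1 (fun p : ℝ × M => φ p.1 p.2)

variable (I) in
/-- `p` is a hyperbolic singularity of the vector field `X` with flow `φ`: `X` vanishes at `p`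
and the linearized flow at `p` admits a hyperbolic splitting `T_pM = Eˢ ⊕ Eᵘ` (this is
equivalent to `DX(p)` having no purely imaginary eigenvalues). -/
def IsHyperbolicSingularity (X : M → E) (φ : ℝ → M → M) (p : M) : Prop :=
  X p = 0 ∧ (∀ t, φ t p = p) ∧
  ∃ (Es Eu : Submodule ℝ E) (C lam : ℝ), 0 < C ∧ lam ∈ Set.Ioo (0:ℝ) 1 ∧
    IsCompl Es Eu ∧
    (∀ (t : ℝ) (v : E), v ∈ Es → tvec I (mfderiv I I (φ t) p (v : TangentSpace I p)) ∈ Es) ∧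
    (∀ (t : ℝ) (v : E), v ∈ Eu → tvec I (mfderiv I I (φ t) p (v : TangentSpace I p)) ∈ Eu) ∧
    (∀ t : ℝ, 0 ≤ t → ∀ v ∈ Es,
      ‖tvec I (mfderiv I I (φ t) p (v : TangentSpace I p))‖ ≤ C * lam ^ t * ‖v‖) ∧
    (∀ t : ℝ, 0 ≤ t → ∀ v ∈ Eu,
      ‖v‖ ≤ C * lam ^ t * ‖tvec I (mfderiv I I (φ t) p (v : TangentSpace I p))‖)

variable (I) in
/-- A hyperbolic critical element: a hyperbolic singularity or a hyperbolic periodic orbit. -/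
def IsHyperbolicCriticalElement (X : M → E) (φ : ℝ → M → M) (p : M) : Prop :=
  IsHyperbolicSingularity I X φ p ∨ IsHyperbolicPeriodicOrbit I X φ p

set_option linter.unusedSectionVars false
set_option maxHeartbeats 1000000

section CFPflowbasic
variable {M : Type*}

lemma CFPnat {φ : ℝ → M → M} (h0 : ∀ x, φ 0 x = x)
    (hadd : ∀ s t x, φ (s + t) x = φ s (φ t x)) {T : ℝ} {p : M} (h : φ T p = p) :
    ∀ n : ℕ, φ (n * T) p = p := by
  intro n; induction n with
  | zero => simpa using h0 p
  | succ n ih =>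
    have he : ((n + 1 : ℕ) : ℝ) * T = n * T + T := by push_cast; ring
    rw [he, hadd, h, ih]

lemma CFPall {φ : ℝ → M → M} (h0 : ∀ x, φ 0 x = x)
    (hadd : ∀ s t x, φ (s + t) x = φ s (φ t x)) {p : M} {δ : ℝ} (hδ : 0 < δ)
    (h : ∀ t, |t| < δ → φ t p = p) : ∀ t, φ t p = p := by
  intro t
  obtain ⟨n, hn⟩ := exists_nat_gt (|t| / δ)
  have hn0 : 0 < (n : ℝ) := lt_of_le_of_lt (div_nonneg (abs_nonneg t) hδ.le) hn
  have habs : |t| < n * δ := by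
    have := (div_lt_iff₀ hδ).mp hn; linarith
  have hsmall : |t / n| < δ := by
    rw [abs_div, abs_of_pos hn0, div_lt_iff₀ hn0]
    linarith
  have hres := CFPnat h0 hadd (h _ hsmall) n
  have : (n : ℝ) * (t / n) = t := by field_simp
  rwa [this] at hres

lemma CFPconn {A : Set ℝ} {δ : ℝ} (hδ : 0 < δ) (h0 : (0 : ℝ) ∈ A)
    (hstep : ∀ s₀ s, |s₀ - s| < δ → s ∈ A → s₀ ∈ A) : ∀ s, s ∈ A := by
  have hopen : IsOpen A := by
    rw [Metric.isOpen_iff]; intro s hs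
    refine ⟨δ, hδ, fun y hy => ?_⟩
    rw [mem_ball, Real.dist_eq] at hy
    exact hstep y s hy hs
  have hclosed : IsClosed A := by
    rw [← isOpen_compl_iff, Metric.isOpen_iff]; intro s hs
    refine ⟨δ, hδ, fun y hy hyA => hs ?_⟩
    rw [mem_ball, Real.dist_eq] at hy
    exact hstep s y (by rw [abs_sub_comm]; exact hy) hyA
  have huniv := IsClopen.eq_univ ⟨hclosed, hopen⟩ ⟨0, h0⟩
  intro s; rw [huniv]; trivial

end CFPflowbasic

lemma CFPker {A : E →L[ℝ] E} {Es Eu : Submodule ℝ E} {κ : ℝ}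
    (hκ : κ < 1) (hinf : Es ⊓ Eu = ⊥)
    (hAs : ∀ v ∈ Es, A v ∈ Es) (hAu : ∀ v ∈ Eu, A v ∈ Eu)
    (hcs : ∀ v ∈ Es, ‖A v‖ ≤ κ * ‖v‖) (hcu : ∀ v ∈ Eu, ‖v‖ ≤ κ * ‖A v‖) :
    ∀ v ∈ Es ⊔ Eu, A v = v → v = 0 := by
  intro v hv hAv
  obtain ⟨a, ha, b, hb, rfl⟩ := Submodule.mem_sup.mp hv
  have hadd : A a + A b = b + a := by
    have h := hAv; rw [map_add] at h
    rw [h]; abel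
  have hd : A a - a = b - A b := sub_eq_sub_iff_add_eq_add.mpr hadd
  have hmem : A a - a ∈ Es ⊓ Eu :=
    ⟨Es.sub_mem (hAs a ha) ha, hd ▸ Eu.sub_mem hb (hAu b hb)⟩
  rw [hinf, Submodule.mem_bot] at hmem
  have h1 : A a = a := by rwa [sub_eq_zero] at hmem
  have h2 : A b = b := by
    have := hd ▸ hmem
    have h' : b - A b = 0 := by rw [← hd]; exact hmem
    rw [sub_eq_zero] at h'; exact h'.symm
  have ha0 : a = 0 := by
    have h := hcs a ha; rw [h1] at h
    have : ‖a‖ ≤ 0 := by nlinarith [norm_nonneg a]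
    exact norm_le_zero_iff.mp this
  have hb0 : b = 0 := by
    have h := hcu b hb; rw [h2] at h
    have : ‖b‖ ≤ 0 := by nlinarith [norm_nonneg b]
    exact norm_le_zero_iff.mp this
  simp [ha0, hb0]

lemma CFPbij [FiniteDimensional ℝ E] {A : E →L[ℝ] E}
    {Es Eu : Submodule ℝ E} {κ : ℝ}
    (hκ : κ < 1) (hsup : Es ⊔ Eu = ⊤) (hinf : Es ⊓ Eu = ⊥)
    (hAs : ∀ v ∈ Es, A v ∈ Es) (hAu : ∀ v ∈ Eu, A v ∈ Eu)
    (hcs : ∀ v ∈ Es, ‖A v‖ ≤ κ * ‖v‖) (hcu : ∀ v ∈ Eu, ‖v‖ ≤ κ * ‖A v‖) :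
    Function.Bijective (A - ContinuousLinearMap.id ℝ E) := by
  have hker := CFPker hκ hinf hAs hAu hcs hcu
  have hinj : Function.Injective (⇑(A - ContinuousLinearMap.id ℝ E)) := by
    intro x y hxy
    simp only [ContinuousLinearMap.sub_apply, ContinuousLinearMap.id_apply] at hxy
    have h1 : A x - A y = x - y := by
      rw [sub_eq_sub_iff_add_eq_add] at hxy ⊢
      rw [hxy]; abel
    have h0 : A (x - y) = x - y := by rw [map_sub]; exact h1
    have := hker (x - y) (by rw [hsup]; trivial) h0
    exact sub_eq_zero.mp this
  have hinjL : Function.Injective ((A - ContinuousLinearMap.id ℝ E) : E →ₗ[ℝ] E) := hinj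
  exact ⟨hinj, LinearMap.injective_iff_surjective.mp hinjL⟩

lemma CFPchartflow [I.Boundaryless] {φ : ℝ → M → M}
    (hφ : ContMDiff ((𝓘(ℝ, ℝ)).prod I) I 1 (fun p : ℝ × M => φ p.1 p.2))
    (p : M) (t₀ : ℝ) (hfix : φ t₀ p = p) :
    ContDiffAt ℝ 1 (fun q : ℝ × E => extChartAt I p (φ q.1 ((extChartAt I p).symm q.2)))
      (t₀, extChartAt I p p) := by
  have hsymm : ContMDiffAt 𝓘(ℝ, E) I 1 (extChartAt I p).symm (extChartAt I p p) :=
    (contMDiffOn_extChartAt_symm p).contMDiffAt (extChartAt_target_mem_nhds p)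
  have h1 : ContMDiffAt ((𝓘(ℝ, ℝ)).prod 𝓘(ℝ, E)) ((𝓘(ℝ, ℝ)).prod I) 1
      (Prod.map (id : ℝ → ℝ) (extChartAt I p).symm) (t₀, extChartAt I p p) :=
    ContMDiffAt.prodMap contMDiffAt_id hsymm
  have h2 : ContMDiffAt ((𝓘(ℝ, ℝ)).prod 𝓘(ℝ, E)) I 1
      (fun q : ℝ × E => φ q.1 ((extChartAt I p).symm q.2)) (t₀, extChartAt I p p) :=
    (hφ.contMDiffAt).comp (t₀, extChartAt I p p) h1
  have h3 : ContMDiffAt I 𝓘(ℝ, E) 1 (extChartAt I p)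
      (φ t₀ ((extChartAt I p).symm (extChartAt I p p))) := by
    rw [(extChartAt I p).left_inv (mem_extChartAt_source p), hfix]
    exact contMDiffOn_extChartAt.contMDiffAt
      ((chartAt H p).open_source.mem_nhds (mem_chart_source H p))
  have h4 := h3.comp (t₀, extChartAt I p p) h2
  have h5 : ContMDiffAt 𝓘(ℝ, ℝ × E) 𝓘(ℝ, E) 1
      (fun q : ℝ × E => extChartAt I p (φ q.1 ((extChartAt I p).symm q.2)))
      (t₀, extChartAt I p p) := by
    rw [modelWithCornersSelf_prod, ← chartedSpaceSelf_prod]; exact h4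
  exact h5.contDiffAt

lemma CFPbridge [I.Boundaryless] {f : M → M} {p : M} (hf : MDifferentiableAt I I f p)
    (hfix : f p = p) :
    (mfderiv I I f p : E →L[ℝ] E) =
      fderiv ℝ (fun y => extChartAt I p (f ((extChartAt I p).symm y))) (extChartAt I p p) := by
  rw [hf.mfderiv, I.range_eq_univ, fderivWithin_univ]
  simp [writtenInExtChartAt, hfix, Function.comp_def]
  rfl

lemma CFPmdiffAt {φ : ℝ → M → M}
    (hφ : ContMDiff ((𝓘(ℝ, ℝ)).prod I) I 1 (fun p : ℝ × M => φ p.1 p.2)) (S : ℝ) (x : M) :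
    MDifferentiableAt I I (φ S) x :=
  ((hφ.contMDiffAt).comp x
    (ContMDiffAt.prodMk contMDiffAt_const contMDiffAt_id)).mdifferentiableAt one_ne_zero

/-- the inverse-function-theorem based isolation of a fixed point. -/

lemma CFPisolated [I.Boundaryless] [FiniteDimensional ℝ E] [CompleteSpace E]
    {φ : ℝ → M → M}
    (hφ : ContMDiff ((𝓘(ℝ, ℝ)).prod I) I 1 (fun p : ℝ × M => φ p.1 p.2))
    {p : M} {S : ℝ} (hfix : φ S p = p)
    (hbij : Function.Bijective
      ((show E →L[ℝ] E from mfderiv I I (φ S) p) - ContinuousLinearMap.id ℝ E)) :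
    ∃ U ∈ 𝓝 p, ∀ x ∈ U, φ S x = x → x = p := by
  set c := extChartAt I p with hc
  set G : E → E := fun y => c (φ S (c.symm y)) with hG
  have hGc : ContDiffAt ℝ 1 G (c p) :=
    ContDiffAt.comp (g := fun q : ℝ × E => extChartAt I p (φ q.1 ((extChartAt I p).symm q.2)))
      (f := fun y : E => ((S : ℝ), y)) ((extChartAt I p) p)
      (CFPchartflow hφ p S hfix) (contDiffAt_const.prodMk contDiffAt_id)
  have hA : (show E →L[ℝ] E from mfderiv I I (φ S) p) = fderiv ℝ G (c p) :=
    CFPbridge (CFPmdiffAt hφ S p) hfix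
  set B : E →L[ℝ] E := (show E →L[ℝ] E from mfderiv I I (φ S) p) - ContinuousLinearMap.id ℝ E with hB
  set eB : E ≃L[ℝ] E :=
    (LinearEquiv.ofBijective (B : E →ₗ[ℝ] E) hbij).toContinuousLinearEquiv with heB
  have hBe : (eB : E →L[ℝ] E) = B := by ext v; rfl
  have hg : HasStrictFDerivAt (fun y => G y - y) ((eB : E →L[ℝ] E)) (c p) := by
    rw [hBe, hB, hA]
    exact (hGc.hasStrictFDerivAt one_ne_zero).sub (hasStrictFDerivAt_id _)
  set hom := hg.toOpenPartialHomeomorph _ with hhom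
  have hsrc : hom.source ∈ 𝓝 (c p) :=
    hom.open_source.mem_nhds hg.mem_toOpenPartialHomeomorph_source
  have hcoe : ⇑hom = fun y => G y - y := hg.toOpenPartialHomeomorph_coe
  -- build the neighborhood U
  have hU1 : c.source ∈ 𝓝 p := extChartAt_source_mem_nhds p
  have hcphi : Continuous (φ S) := by
    have : Continuous (fun q : ℝ × M => φ q.1 q.2) := (hφ.continuous)
    exact this.comp (continuous_const.prodMk continuous_id)
  have hU2 : (φ S) ⁻¹' c.source ∈ 𝓝 p := by
    apply hcphi.continuousAt.preimage_mem_nhds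
    rw [hfix]; exact hU1
  have hU3 : c ⁻¹' hom.source ∈ 𝓝 p :=
    (continuousAt_extChartAt p).preimage_mem_nhds hsrc
  refine ⟨c.source ∩ (φ S) ⁻¹' c.source ∩ c ⁻¹' hom.source,
    inter_mem (inter_mem hU1 hU2) hU3, ?_⟩
  rintro x ⟨⟨hx1, hx2⟩, hx3⟩ hfx
  have hzero : G (c x) - c x = 0 := by
    have : c.symm (c x) = x := c.left_inv hx1
    rw [hG]; simp only [this, hfx]; simp
  have hzero' : G (c p) - c p = 0 := by
    have : c.symm (c p) = p := c.left_inv (mem_extChartAt_source p)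
    rw [hG]; simp only [this, hfix]; simp
  have heq : c x = c p := by
    apply hom.injOn hx3 (mem_of_mem_nhds hsrc)
    rw [hcoe]; simp only [hzero, hzero']
  calc x = c.symm (c x) := (c.left_inv hx1).symm
    _ = c.symm (c p) := by rw [heq]
    _ = p := c.left_inv (mem_extChartAt_source p)


lemma CFPperiodic_local [I.Boundaryless] [FiniteDimensional ℝ E] [CompleteSpace E]
    {φ : ℝ → M → M} {X : M → E}
    (hφ0 : ∀ x, φ 0 x = x) (hφadd : ∀ s t x, φ (s + t) x = φ s (φ t x))
    (hsmooth : ContMDiff ((𝓘(ℝ, ℝ)).prod I) I 1 (fun q : ℝ × M => φ q.1 q.2))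
    (hXflow : ∀ x t, HasMFDerivAt (𝓘(ℝ, ℝ)) I (fun s => φ s x) t
      (ContinuousLinearMap.smulRight (1 : ℝ →L[ℝ] ℝ) (X (φ t x) : TangentSpace I (φ t x))))
    {p : M} {S : ℝ} (hfixS : φ S p = p)
    (hXp : X p ≠ 0) {W : Submodule ℝ E}
    (hWinf : W ⊓ Submodule.span ℝ {X p} = ⊥)
    (hWsup : W ⊔ Submodule.span ℝ {X p} = ⊤)
    (hinj : ∀ v ∈ W, (show E →L[ℝ] E from mfderiv I I (φ S) p) v = v → v = 0) :
    ∃ U ∈ 𝓝 p, ∀ x ∈ U, φ S x = x → ∃ t, x = φ t p := by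
  have hfix0 : φ 0 p = p := hφ0 p
  set c := extChartAt I p with hc
  set pc : E := c p with hpc
  have h00 : pc + ((0 : W) : E) = pc := by simp
  set Ψ : ℝ × W → E := fun q => c (φ q.1 (c.symm (pc + (q.2 : E)))) with hΨdef
  -- Ψ is C¹ at (0,0)
  have hF : ContDiffAt ℝ 1 (fun q : ℝ × E => c (φ q.1 (c.symm q.2))) (0, pc) :=
    CFPchartflow hsmooth p 0 hfix0
  have hF' : ContDiffAt ℝ 1 (fun q : ℝ × E => c (φ q.1 (c.symm q.2)))
      (0, pc + ((0 : W) : E)) := by rw [h00]; exact hF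
  have hαc : ContDiff ℝ 1 (fun q : ℝ × W => ((q.1 : ℝ), pc + (q.2 : E))) :=
    contDiff_fst.prodMk (contDiff_const.add (W.subtypeL.contDiff.comp contDiff_snd))
  have hΨc : ContDiffAt ℝ 1 Ψ (0, 0) :=
    ContDiffAt.comp (g := fun q : ℝ × E => c (φ q.1 (c.symm q.2)))
      (f := fun q : ℝ × W => ((q.1 : ℝ), pc + (q.2 : E))) ((0 : ℝ), (0 : W)) hF' hαc.contDiffAt
  have hΨs : HasStrictFDerivAt Ψ (fderiv ℝ Ψ (0, 0)) (0, 0) := hΨc.hasStrictFDerivAt one_ne_zero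
  set L := fderiv ℝ Ψ (0, 0) with hL
  -- the time-derivative of the flow through p, in the chart
  have hcurveM : HasFDerivAt (fun t : ℝ => c (φ t p))
      (ContinuousLinearMap.smulRight (1 : ℝ →L[ℝ] ℝ) (X p)) 0 := by
    have hmdc : MDifferentiableAt I 𝓘(ℝ, E) c p :=
      mdifferentiableAt_extChartAt (mem_chart_source H p)
    have hcd : mfderiv I 𝓘(ℝ, E) c p = ContinuousLinearMap.id ℝ E := by
      rw [hmdc.mfderiv, I.range_eq_univ, fderivWithin_univ]
      have he : writtenInExtChartAt I 𝓘(ℝ, E) p c =ᶠ[𝓝 (c p)] id := by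
        filter_upwards [extChartAt_target_mem_nhds p] with y hy
        simp only [writtenInExtChartAt, Function.comp_apply, extChartAt_model_space_eq_id,
          PartialEquiv.refl_coe, id_eq]
        exact c.right_inv hy
      rw [he.fderiv_eq, fderiv_id]
    have hmc : HasMFDerivAt I 𝓘(ℝ, E) c p (ContinuousLinearMap.id ℝ E) :=
      hcd ▸ hmdc.hasMFDerivAt
    have hmc' : HasMFDerivAt I 𝓘(ℝ, E) c (φ 0 p) (ContinuousLinearMap.id ℝ E) := by
      rw [hfix0]; exact hmc
    have hcv := hXflow p 0
    rw [hfix0] at hcv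
    have hcomp := hmc'.comp (0 : ℝ) hcv
    rw [hasMFDerivAt_iff_hasFDerivAt] at hcomp
    exact hcomp
  -- partial derivatives of Ψ
  have hinl : L.comp (ContinuousLinearMap.inl ℝ ℝ W)
      = ContinuousLinearMap.smulRight (1 : ℝ →L[ℝ] ℝ) (X p) := by
    have h1 : HasFDerivAt (fun t : ℝ => Ψ (t, 0)) (L.comp (ContinuousLinearMap.inl ℝ ℝ W)) 0 :=
      (hΨs.hasFDerivAt).comp (g := Ψ) (f := fun t : ℝ => ((t, (0 : W)) : ℝ × W)) (0 : ℝ) (hasFDerivAt_prodMk_left (0 : ℝ) (0 : W))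
    have hfun : (fun t : ℝ => Ψ (t, 0)) = fun t => c (φ t p) := by
      funext t
      rw [hΨdef]
      simp only [h00]
      rw [hpc, c.left_inv (mem_extChartAt_source p)]
    rw [hfun] at h1
    exact h1.unique hcurveM
  have hinr : L.comp (ContinuousLinearMap.inr ℝ ℝ W) = W.subtypeL := by
    have h1 : HasFDerivAt (fun w : W => Ψ (0, w)) (L.comp (ContinuousLinearMap.inr ℝ ℝ W)) 0 :=
      (hΨs.hasFDerivAt).comp (g := Ψ) (f := fun w : W => (((0 : ℝ), w) : ℝ × W)) (0 : W) (hasFDerivAt_prodMk_right (0 : ℝ) (0 : W))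
    have hmem : (fun w : W => pc + (w : E)) ⁻¹' c.target ∈ 𝓝 (0 : W) := by
      refine (Continuous.continuousAt ?_).preimage_mem_nhds ?_
      · exact continuous_const.add continuous_subtype_val
      · rw [h00, hpc]
        exact (isOpen_extChartAt_target p).mem_nhds (mem_extChartAt_target p)
    have hev : (fun w : W => Ψ (0, w)) =ᶠ[𝓝 (0 : W)] fun w : W => pc + (w : E) := by
      filter_upwards [hmem] with w hw
      rw [hΨdef]
      simp only [hφ0]
      exact c.right_inv hw
    have h2' : HasFDerivAt (fun w : W => pc + (w : E)) W.subtypeL (0 : W) := by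
      simpa using (W.subtypeL.hasFDerivAt (x := (0 : W))).const_add pc
    exact h1.unique (h2'.congr_of_eventuallyEq hev)
  -- identify L with the model linear map L0
  set L0 : (ℝ × W) →L[ℝ] E :=
    ((ContinuousLinearMap.smulRight (1 : ℝ →L[ℝ] ℝ) (X p)).comp
      (ContinuousLinearMap.fst ℝ ℝ W)) + (W.subtypeL.comp (ContinuousLinearMap.snd ℝ ℝ W))
    with hL0
  have hLL0 : L = L0 := by
    refine ContinuousLinearMap.ext fun q => ?_
    have hq : ((q.1, (0 : W)) : ℝ × W) + ((0 : ℝ), q.2) = q := by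
      ext <;> simp
    have e1 : L (q.1, (0 : W)) = q.1 • X p := by
      have := congrArg (fun T : ℝ →L[ℝ] E => T q.1) hinl
      simpa using this
    have e2 : L ((0 : ℝ), q.2) = (q.2 : E) := by
      have := congrArg (fun T : W →L[ℝ] E => T q.2) hinr
      simpa using this
    calc L q = L ((q.1, (0 : W)) + ((0 : ℝ), q.2)) := by rw [hq]
      _ = L (q.1, (0 : W)) + L ((0 : ℝ), q.2) := map_add _ _ _
      _ = q.1 • X p + (q.2 : E) := by rw [e1, e2]
      _ = L0 q := by simp [hL0]
  have hL0bij : Function.Bijective L0 := by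
    have hker0 : ∀ q : ℝ × W, L0 q = 0 → q = 0 := by
      rintro ⟨t, w⟩ h
      simp only [hL0, ContinuousLinearMap.add_apply, ContinuousLinearMap.comp_apply,
        ContinuousLinearMap.coe_fst', ContinuousLinearMap.coe_snd',
        ContinuousLinearMap.smulRight_apply, ContinuousLinearMap.one_apply,
        Submodule.subtypeL_apply] at h
      have h2 : t • X p = -(w : E) := eq_neg_of_add_eq_zero_left h
      have h3 : t • X p ∈ W ⊓ Submodule.span ℝ {X p} := by
        constructor
        · rw [h2]; exact W.neg_mem w.2
        · exact Submodule.smul_mem _ _ (Submodule.mem_span_singleton_self _)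
      rw [hWinf, Submodule.mem_bot] at h3
      have ht : t = 0 := by
        rcases smul_eq_zero.mp h3 with h | h
        · exact h
        · exact absurd h hXp
      have hw : (w : E) = 0 := by
        rw [ht, zero_smul] at h2
        simpa using h2.symm
      refine Prod.ext ht ?_
      exact Subtype.ext hw
    constructor
    · intro a b hab
      have := hker0 (a - b) (by rw [map_sub, hab, sub_self])
      exact sub_eq_zero.mp this
    · intro v
      have hv : v ∈ W ⊔ Submodule.span ℝ {X p} := by rw [hWsup]; trivial
      obtain ⟨a, haW, b, hbs, rfl⟩ := Submodule.mem_sup.mp hv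
      obtain ⟨r, rfl⟩ := Submodule.mem_span_singleton.mp hbs
      refine ⟨(r, ⟨a, haW⟩), ?_⟩
      simp [hL0, add_comm]
  set eL0 : (ℝ × W) ≃L[ℝ] E :=
    (LinearEquiv.ofBijective (L0 : (ℝ × W) →ₗ[ℝ] E) hL0bij).toContinuousLinearEquiv with heL0
  have hLe : (eL0 : (ℝ × W) →L[ℝ] E) = L0 := by
    refine ContinuousLinearMap.ext fun q => rfl
  have hΨs' : HasStrictFDerivAt Ψ ((eL0 : (ℝ × W) →L[ℝ] E)) (0, 0) := by
    rw [hLe, ← hLL0]; exact hΨs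
  set hom1 := hΨs'.toOpenPartialHomeomorph _ with hhom1
  have hcoe1 : ⇑hom1 = Ψ := hΨs'.toOpenPartialHomeomorph_coe
  have h1src : (0, (0 : W)) ∈ hom1.source := hΨs'.mem_toOpenPartialHomeomorph_source
  -- second IFT: the transversal displacement map g
  set G : E → E := fun y => c (φ S (c.symm y)) with hGdef
  have hGc : ContDiffAt ℝ 1 G pc :=
    ContDiffAt.comp (g := fun q : ℝ × E => extChartAt I p (φ q.1 ((extChartAt I p).symm q.2)))
      (f := fun y : E => ((S : ℝ), y)) pc (CFPchartflow hsmooth p S hfixS)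
      (contDiffAt_const.prodMk contDiffAt_id)
  have hA : (show E →L[ℝ] E from mfderiv I I (φ S) p) = fderiv ℝ G pc :=
    CFPbridge (CFPmdiffAt hsmooth S p) hfixS
  have hGs : HasStrictFDerivAt (fun y => G y - y)
      (fderiv ℝ G pc - ContinuousLinearMap.id ℝ E) pc :=
    (hGc.hasStrictFDerivAt one_ne_zero).sub (hasStrictFDerivAt_id _)
  have hGs2 : HasStrictFDerivAt (fun y => G y - y)
      (fderiv ℝ G pc - ContinuousLinearMap.id ℝ E) (pc + ((0 : W) : E)) := by
    rw [h00]; exact hGs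
  have hβ : HasStrictFDerivAt (fun w : W => pc + (w : E)) W.subtypeL (0 : W) := by
    simpa using (W.subtypeL.hasStrictFDerivAt (x := (0 : W))).const_add pc
  set g : W → E := fun w => G (pc + (w : E)) - (pc + (w : E)) with hgdef
  set D : W →L[ℝ] E := (fderiv ℝ G pc - ContinuousLinearMap.id ℝ E).comp W.subtypeL with hD
  have hgs : HasStrictFDerivAt g D (0 : W) := hGs2.comp (0 : W) hβ
  have hDinj : ∀ w : W, D w = 0 → w = 0 := by
    intro w h
    have h1 : fderiv ℝ G pc (w : E) - (w : E) = 0 := by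
      simpa [hD] using h
    have h2 : (show E →L[ℝ] E from mfderiv I I (φ S) p) (w : E) = (w : E) := by
      rw [hA]; exact sub_eq_zero.mp h1
    exact Subtype.ext (hinj (w : E) w.2 h2)
  have hWE : Module.finrank ℝ W + 1 = Module.finrank ℝ E := by
    have hh := Submodule.finrank_sup_add_finrank_inf_eq W (Submodule.span ℝ {X p})
    rw [hWsup, hWinf] at hh
    rw [finrank_top, finrank_bot, finrank_span_singleton hXp] at hh
    omega
  obtain ⟨u, hu⟩ : ∃ u : E, u ∉ LinearMap.range (D : W →ₗ[ℝ] E) := by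
    by_contra hcon
    push_neg at hcon
    have htop : LinearMap.range (D : W →ₗ[ℝ] E) = ⊤ := Submodule.eq_top_iff'.mpr hcon
    have hr : Module.finrank ℝ (LinearMap.range (D : W →ₗ[ℝ] E)) = Module.finrank ℝ W :=
      LinearMap.finrank_range_of_inj (by
        intro a b hab
        have hsub := hDinj (a - b) (by rw [map_sub]; exact sub_eq_zero.mpr hab)
        exact sub_eq_zero.mp hsub)
    rw [htop, finrank_top] at hr
    omega
  set Bh : (ℝ × W) →L[ℝ] E := (D.comp (ContinuousLinearMap.snd ℝ ℝ W)) +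
    ((ContinuousLinearMap.fst ℝ ℝ W).smulRight u) with hBh
  set gh : ℝ × W → E := fun q => g q.2 + q.1 • u with hghdef
  have hghs : HasStrictFDerivAt gh Bh (0, (0 : W)) := by
    have h1 : HasStrictFDerivAt (fun q : ℝ × W => g q.2)
        (D.comp (ContinuousLinearMap.snd ℝ ℝ W)) (0, (0 : W)) :=
      hgs.comp (0, (0 : W)) (ContinuousLinearMap.snd ℝ ℝ W).hasStrictFDerivAt
    have h2 : HasStrictFDerivAt (fun q : ℝ × W => q.1 • u)
        ((ContinuousLinearMap.fst ℝ ℝ W).smulRight u) (0, (0 : W)) :=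
      ((ContinuousLinearMap.fst ℝ ℝ W).smulRight u).hasStrictFDerivAt
    exact h1.add h2
  have hBhbij : Function.Bijective Bh := by
    have hker : ∀ q : ℝ × W, Bh q = 0 → q = 0 := by
      rintro ⟨r, w⟩ h
      simp only [hBh, ContinuousLinearMap.add_apply, ContinuousLinearMap.comp_apply,
        ContinuousLinearMap.coe_snd', ContinuousLinearMap.coe_fst',
        ContinuousLinearMap.smulRight_apply] at h
      have hr : r = 0 := by
        by_contra hr0
        have hmem : r • u ∈ LinearMap.range (D : W →ₗ[ℝ] E) := by
          refine ⟨-w, ?_⟩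
          have : D (-w) = r • u := by
            rw [map_neg]
            exact neg_eq_of_add_eq_zero_right h
          exact this
        have humem : u ∈ LinearMap.range (D : W →ₗ[ℝ] E) := by
          have hsm := Submodule.smul_mem (LinearMap.range (D : W →ₗ[ℝ] E)) r⁻¹ hmem
          rwa [smul_smul, inv_mul_cancel₀ hr0, one_smul] at hsm
        exact hu humem
      have hwD : D w = 0 := by
        rw [hr, zero_smul, add_zero] at h; exact h
      exact Prod.ext hr (hDinj w hwD)
    constructor
    · intro a b hab
      have := hker (a - b) (by rw [map_sub]; exact sub_eq_zero.mpr hab)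
      exact sub_eq_zero.mp this
    · have hfr : Module.finrank ℝ (ℝ × W) = Module.finrank ℝ E := by
        rw [Module.finrank_prod, Module.finrank_self]
        omega
      have hinjL : Function.Injective (Bh : (ℝ × W) →ₗ[ℝ] E) := by
        intro a b hab
        have := hker (a - b) (by rw [map_sub]; exact sub_eq_zero.mpr hab)
        exact sub_eq_zero.mp this
      exact (LinearMap.injective_iff_surjective_of_finrank_eq_finrank hfr).mp hinjL
  set eBh : (ℝ × W) ≃L[ℝ] E :=
    (LinearEquiv.ofBijective (Bh : (ℝ × W) →ₗ[ℝ] E) hBhbij).toContinuousLinearEquiv with heBh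
  have hBe : (eBh : (ℝ × W) →L[ℝ] E) = Bh := ContinuousLinearMap.ext fun q => rfl
  have hghs' : HasStrictFDerivAt gh ((eBh : (ℝ × W) →L[ℝ] E)) (0, (0 : W)) := by
    rw [hBe]; exact hghs
  set hom2 := hghs'.toOpenPartialHomeomorph _ with hhom2
  have hcoe2 : ⇑hom2 = gh := hghs'.toOpenPartialHomeomorph_coe
  obtain ⟨εg, hεg0, hεgsub⟩ := Metric.mem_nhds_iff.mp
    (hom2.open_source.mem_nhds hghs'.mem_toOpenPartialHomeomorph_source)
  -- the good neighborhood K of (0,0)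
  have hθc : ContinuousAt (fun q : ℝ × W => φ q.1 (c.symm (pc + (q.2 : E)))) (0, (0 : W)) := by
    have hsymmc : ContinuousAt c.symm (pc + ((0 : W) : E)) := by
      rw [h00, hpc]; exact continuousAt_extChartAt_symm p
    have haddc : ContinuousAt (fun q : ℝ × W => pc + (q.2 : E)) ((0 : ℝ), (0 : W)) :=
      (continuous_const.add (continuous_subtype_val.comp continuous_snd)).continuousAt
    have hin : ContinuousAt (fun q : ℝ × W => c.symm (pc + (q.2 : E))) (0, (0 : W)) :=
      ContinuousAt.comp (x := ((0 : ℝ), (0 : W))) (f := fun q : ℝ × W => pc + (q.2 : E))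
        (g := ⇑c.symm) hsymmc haddc
    exact (hsmooth.continuous.continuousAt).comp (continuousAt_fst.prodMk hin)
  have hθ0 : φ (0 : ℝ) (c.symm (pc + ((0 : W) : E))) = p := by
    rw [h00, hpc, c.left_inv (mem_extChartAt_source p), hφ0]
  have hK1 : (fun q : ℝ × W => φ q.1 (c.symm (pc + (q.2 : E)))) ⁻¹' c.source
      ∈ 𝓝 ((0 : ℝ), (0 : W)) := by
    refine hθc.preimage_mem_nhds ?_
    show c.source ∈ 𝓝 (φ (0 : ℝ) (c.symm (pc + ((0 : W) : E))))
    rw [hθ0]; exact extChartAt_source_mem_nhds p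
  have hK2 : (fun q : ℝ × W => pc + (q.2 : E)) ⁻¹' c.target ∈ 𝓝 ((0 : ℝ), (0 : W)) := by
    refine ((continuous_const.add
      (continuous_subtype_val.comp continuous_snd)).continuousAt).preimage_mem_nhds ?_
    show c.target ∈ 𝓝 (pc + ((0 : W) : E))
    rw [h00, hpc]
    exact extChartAt_target_mem_nhds p
  have hK3 : (Prod.snd : ℝ × W → W) ⁻¹' Metric.ball (0 : W) εg ∈ 𝓝 ((0 : ℝ), (0 : W)) :=
    continuous_snd.continuousAt.preimage_mem_nhds (Metric.ball_mem_nhds _ hεg0)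
  have hKmem : hom1.source
      ∩ ((fun q : ℝ × W => φ q.1 (c.symm (pc + (q.2 : E)))) ⁻¹' c.source)
      ∩ ((fun q : ℝ × W => pc + (q.2 : E)) ⁻¹' c.target)
      ∩ ((Prod.snd : ℝ × W → W) ⁻¹' Metric.ball (0 : W) εg) ∈ 𝓝 ((0 : ℝ), (0 : W)) :=
    inter_mem (inter_mem (inter_mem (hom1.open_source.mem_nhds h1src) hK1) hK2) hK3
  have hΨ00 : Ψ ((0 : ℝ), (0 : W)) = pc := by
    show c (φ 0 (c.symm (pc + ((0 : W) : E)))) = pc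
    rw [h00, hpc, c.left_inv (mem_extChartAt_source p), hφ0]
  have himg : hom1 '' (hom1.source
      ∩ ((fun q : ℝ × W => φ q.1 (c.symm (pc + (q.2 : E)))) ⁻¹' c.source)
      ∩ ((fun q : ℝ × W => pc + (q.2 : E)) ⁻¹' c.target)
      ∩ ((Prod.snd : ℝ × W → W) ⁻¹' Metric.ball (0 : W) εg)) ∈ 𝓝 pc := by
    have hmapeq := hom1.map_nhds_eq h1src
    have h0 : hom1 ((0 : ℝ), (0 : W)) = pc := by
      show (⇑hom1) ((0 : ℝ), (0 : W)) = pc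
      rw [hcoe1]; exact hΨ00
    rw [h0] at hmapeq
    rw [← hmapeq]
    exact image_mem_map hKmem
  refine ⟨c.source ∩ c ⁻¹' (hom1 '' (hom1.source
      ∩ ((fun q : ℝ × W => φ q.1 (c.symm (pc + (q.2 : E)))) ⁻¹' c.source)
      ∩ ((fun q : ℝ × W => pc + (q.2 : E)) ⁻¹' c.target)
      ∩ ((Prod.snd : ℝ × W → W) ⁻¹' Metric.ball (0 : W) εg))),
    inter_mem (extChartAt_source_mem_nhds p)
      ((continuousAt_extChartAt p).preimage_mem_nhds himg), ?_⟩
  rintro x ⟨hxsrc, hximg⟩ hfx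
  obtain ⟨q, hqK, hqeq⟩ := hximg
  obtain ⟨⟨⟨hqhom, hqθ⟩, hqT⟩, hqw⟩ := hqK
  rw [hcoe1] at hqeq
  have hxz : x = φ q.1 (c.symm (pc + (q.2 : E))) := by
    have h1 : c (φ q.1 (c.symm (pc + (q.2 : E)))) = c x := hqeq
    calc x = c.symm (c x) := (c.left_inv hxsrc).symm
      _ = c.symm (c (φ q.1 (c.symm (pc + (q.2 : E))))) := by rw [h1]
      _ = φ q.1 (c.symm (pc + (q.2 : E))) := c.left_inv hqθ
  have hzfix : φ S (c.symm (pc + (q.2 : E))) = c.symm (pc + (q.2 : E)) := by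
    have hzx : φ (-q.1) x = c.symm (pc + (q.2 : E)) := by
      rw [hxz, ← hφadd]
      simp [hφ0]
    calc φ S (c.symm (pc + (q.2 : E))) = φ S (φ (-q.1) x) := by rw [hzx]
      _ = φ (S + -q.1) x := (hφadd _ _ _).symm
      _ = φ (-q.1 + S) x := by ring_nf
      _ = φ (-q.1) (φ S x) := hφadd _ _ _
      _ = φ (-q.1) x := by rw [hfx]
      _ = c.symm (pc + (q.2 : E)) := hzx
  have hgw : g q.2 = 0 := by
    have hG1 : G (pc + ((q.2 : W) : E)) = pc + ((q.2 : W) : E) := by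
      show c (φ S (c.symm (pc + (q.2 : E)))) = pc + (q.2 : E)
      rw [hzfix]
      exact c.right_inv hqT
    show G (pc + ((q.2 : W) : E)) - (pc + ((q.2 : W) : E)) = 0
    rw [hG1, sub_self]
  have hg0 : g (0 : W) = 0 := by
    show G (pc + ((0 : W) : E)) - (pc + ((0 : W) : E)) = 0
    rw [h00]
    have hGpc : G pc = pc := by
      show c (φ S (c.symm pc)) = pc
      rw [hpc, c.left_inv (mem_extChartAt_source p), hfixS]
    rw [hGpc, sub_self]
  have hwball : ((0 : ℝ), q.2) ∈ hom2.source := by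
    apply hεgsub
    rw [Metric.mem_ball, Prod.dist_eq]
    simp only [dist_self]
    rw [max_eq_right dist_nonneg]
    exact Metric.mem_ball.mp hqw
  have h0ball : ((0 : ℝ), (0 : W)) ∈ hom2.source := hghs'.mem_toOpenPartialHomeomorph_source
  have hweq : ((0 : ℝ), q.2) = ((0 : ℝ), (0 : W)) := by
    apply hom2.injOn hwball h0ball
    show (⇑hom2) ((0 : ℝ), q.2) = (⇑hom2) ((0 : ℝ), (0 : W))
    rw [hcoe2]
    show g q.2 + (0 : ℝ) • u = g (0 : W) + (0 : ℝ) • u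
    rw [hgw, hg0]
  have hw0 : q.2 = (0 : W) := congrArg Prod.snd hweq
  refine ⟨q.1, ?_⟩
  rw [hxz, hw0, h00, hpc, c.left_inv (mem_extChartAt_source p)]

/-- **Lemma.** If the `C^1` flow `(Y_s)_s` belongs to the `C^1`-centralizer of the `C^1` flow
`(X_t)_t` on a compact Riemannian manifold, then for every `s ∈ ℝ` and every hyperbolic
critical element `p` of `(X_t)_t`, the diffeomorphism `Y_s` maps the orbit `γ_p` onto
itself. -/
theorem commuting_flow_preserves_hyperbolic_critical_orbits
    [CompactSpace M] [I.Boundaryless] [FiniteDimensional ℝ E]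
    (φ : ℝ → M → M) (hφ : IsC1Flow I φ)
    (X : M → E) (hX : IsFlowOf I X φ)
    (ψ : ℝ → M → M) (hψ : IsC1Flow I ψ)
    (hcomm : FlowsCommute φ ψ)
    (p : M) (hp : IsHyperbolicCriticalElement I X φ p) :
    ∀ s : ℝ, ψ s '' flowOrbit φ p = flowOrbit φ p := by
  obtain ⟨⟨hφcont, hφ0, hφadd⟩, hsmooth⟩ := hφ
  obtain ⟨⟨hψcont, hψ0, hψadd⟩, hψsmooth⟩ := hψ
  rcases hp with hsing | hper
  · -- singular case
    obtain ⟨hX0, hfixall, Es, Eu, C, lam, hC, hlam, hcompl, hAs, hAu, hcs, hcu⟩ := hsing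
    obtain ⟨n, hn⟩ := exists_pow_lt_of_lt_one (show (0:ℝ) < 1/C by positivity) hlam.2
    set S : ℝ := (n : ℝ) with hS
    have hSnn : (0:ℝ) ≤ S := Nat.cast_nonneg n
    have hκ : C * lam ^ S < 1 := by
      have h1 : lam ^ S = lam ^ n := Real.rpow_natCast lam n
      rw [h1]
      calc C * lam ^ n < C * (1/C) := by
            exact mul_lt_mul_of_pos_left hn hC
        _ = 1 := by field_simp
    have hfixS : φ S p = p := hfixall S
    have hbij : Function.Bijective
        ((show E →L[ℝ] E from mfderiv I I (φ S) p) - ContinuousLinearMap.id ℝ E) := by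
      refine CFPbij hκ hcompl.sup_eq_top hcompl.inf_eq_bot ?_ ?_ ?_ ?_
      · intro v hv; exact hAs S v hv
      · intro v hv; exact hAu S v hv
      · intro v hv; exact hcs S hSnn v hv
      · intro v hv; exact hcu S hSnn v hv
    obtain ⟨U, hU, hUiso⟩ := CFPisolated hsmooth hfixS hbij
    have hcontψp : Continuous fun s : ℝ => ψ s p :=
      hψcont.comp (continuous_id.prodMk continuous_const)
    obtain ⟨δ, hδ0, hball⟩ := Metric.mem_nhds_iff.mp
      (hcontψp.continuousAt.preimage_mem_nhds (show U ∈ 𝓝 (ψ 0 p) by rw [hψ0 p]; exact hU))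
    have hall : ∀ s, ψ s p = p := by
      refine CFPconn hδ0 (show (0:ℝ) ∈ {s | ψ s p = p} from hψ0 p) ?_
      intro s₀ s hd hs
      have hz : ψ (s₀ - s) p ∈ U :=
        hball (by rw [mem_ball, Real.dist_eq, sub_zero]; exact hd)
      have hfixz : φ S (ψ (s₀ - s) p) = ψ (s₀ - s) p := by
        have h := hcomm (s₀ - s) S p
        rw [hfixS] at h
        exact h.symm
      have hzp : ψ (s₀ - s) p = p := hUiso _ hz hfixz
      have he : ψ s₀ p = ψ (s₀ - s) (ψ s p) := by rw [← hψadd, sub_add_cancel]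
      show ψ s₀ p = p
      rw [he, hs, hzp]
    intro s
    have horb : flowOrbit φ p = {p} := by
      unfold flowOrbit
      have hh : (fun t => φ t p) = fun _ => p := funext hfixall
      rw [hh, range_const]
    rw [horb, image_singleton, hall s]
  · -- periodic case
    obtain ⟨hperiodic, Es, Eu, C, lam, hC, hlam, hsplit⟩ := hper
    obtain ⟨⟨T, hT0, hTfix⟩, hnotall⟩ := hperiodic
    have hporb : p ∈ flowOrbit φ p := ⟨0, hφ0 p⟩
    have hlamT0 : 0 < lam ^ T := Real.rpow_pos_of_pos hlam.1 T
    have hlamT1 : lam ^ T < 1 := Real.rpow_lt_one hlam.1.le hlam.2 hT0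
    obtain ⟨k, hk⟩ := exists_pow_lt_of_lt_one (show (0:ℝ) < 1/C by positivity) hlamT1
    set S : ℝ := (k : ℝ) * T with hSdef
    have hSfix : φ S p = p := CFPnat hφ0 hφadd hTfix k
    have hS0 : (0:ℝ) ≤ S := mul_nonneg (Nat.cast_nonneg k) hT0.le
    have hκ : C * lam ^ S < 1 := by
      have h1 : lam ^ S = (lam ^ T) ^ k := by
        rw [hSdef, mul_comm, Real.rpow_mul hlam.1.le, Real.rpow_natCast]
      rw [h1]
      calc C * (lam ^ T) ^ k < C * (1/C) := mul_lt_mul_of_pos_left hk hC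
        _ = 1 := by field_simp
    obtain ⟨hsup, hinfs, hinfu, hinfspan, hAs, hAu, hcs, hcu⟩ := hsplit p hporb
    have hEsEu_bot : Es p ⊓ Eu p = ⊥ :=
      le_bot_iff.mp (le_trans (inf_le_inf_left _ le_sup_left) hinfs.le)
    have hAs' : ∀ v ∈ Es p, (show E →L[ℝ] E from mfderiv I I (φ S) p) v ∈ Es p := by
      intro v hv
      have h := hAs S v hv
      rwa [hSfix] at h
    have hAu' : ∀ v ∈ Eu p, (show E →L[ℝ] E from mfderiv I I (φ S) p) v ∈ Eu p := by
      intro v hv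
      have h := hAu S v hv
      rwa [hSfix] at h
    have hcs' : ∀ v ∈ Es p,
        ‖(show E →L[ℝ] E from mfderiv I I (φ S) p) v‖ ≤ (C * lam ^ S) * ‖v‖ := by
      intro v hv
      have h := hcs S hS0 v hv
      exact h
    have hcu' : ∀ v ∈ Eu p,
        ‖v‖ ≤ (C * lam ^ S) * ‖(show E →L[ℝ] E from mfderiv I I (φ S) p) v‖ := by
      intro v hv
      have h := hcu S hS0 v hv
      exact h
    have hcontψp : Continuous fun s : ℝ => ψ s p :=
      hψcont.comp (continuous_id.prodMk continuous_const)
    by_cases hXp : X p = 0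
    · exfalso
      have hspan0 : Submodule.span ℝ {X p} = ⊥ := by
        rw [hXp]; simp
      have hsup' : Es p ⊔ Eu p = ⊤ := by
        rw [hspan0, sup_bot_eq] at hsup; exact hsup
      have hbij := CFPbij hκ hsup' hEsEu_bot hAs' hAu' hcs' hcu'
      obtain ⟨U, hU, hUiso⟩ := CFPisolated hsmooth hSfix hbij
      have hcontφp : Continuous fun t : ℝ => φ t p :=
        hφcont.comp (continuous_id.prodMk continuous_const)
      obtain ⟨δ, hδ0, hball⟩ := Metric.mem_nhds_iff.mp
        (hcontφp.continuousAt.preimage_mem_nhds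
          (show U ∈ 𝓝 (φ 0 p) by rw [hφ0 p]; exact hU))
      have hfixnear : ∀ t, |t| < δ → φ t p = p := by
        intro t ht
        apply hUiso _ (hball (by rw [mem_ball, Real.dist_eq, sub_zero]; exact ht))
        calc φ S (φ t p) = φ (S + t) p := (hφadd _ _ _).symm
          _ = φ (t + S) p := by ring_nf
          _ = φ t (φ S p) := hφadd _ _ _
          _ = φ t p := by rw [hSfix]
      exact hnotall (CFPall hφ0 hφadd hδ0 hfixnear)
    · have hWinf : (Es p ⊔ Eu p) ⊓ Submodule.span ℝ {X p} = ⊥ := by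
        rw [inf_comm]; exact hinfspan
      have hinjW : ∀ v ∈ Es p ⊔ Eu p,
          (show E →L[ℝ] E from mfderiv I I (φ S) p) v = v → v = 0 :=
        CFPker hκ hEsEu_bot hAs' hAu' hcs' hcu'
      obtain ⟨U, hU, hUiso⟩ :=
        CFPperiodic_local hφ0 hφadd hsmooth hX.2 hSfix hXp hWinf hsup hinjW
      obtain ⟨δ, hδ0, hball⟩ := Metric.mem_nhds_iff.mp
        (hcontψp.continuousAt.preimage_mem_nhds
          (show U ∈ 𝓝 (ψ 0 p) by rw [hψ0 p]; exact hU))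
      have hA : ∀ s : ℝ, ∃ r : ℝ, ψ s p = φ r p := by
        refine CFPconn hδ0
          (show (0:ℝ) ∈ {s | ∃ r : ℝ, ψ s p = φ r p} from ⟨0, by rw [hψ0, hφ0]⟩) ?_
        rintro s₀ s hd ⟨r, hr⟩
        have hz : ψ (s₀ - s) p ∈ U :=
          hball (by rw [mem_ball, Real.dist_eq, sub_zero]; exact hd)
        have hzfix : φ S (ψ (s₀ - s) p) = ψ (s₀ - s) p := by
          have h := hcomm (s₀ - s) S p
          rw [hSfix] at h
          exact h.symm
        obtain ⟨t, hzt⟩ := hUiso _ hz hzfix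
        refine ⟨r + t, ?_⟩
        have he : ψ s₀ p = ψ (s₀ - s) (ψ s p) := by rw [← hψadd, sub_add_cancel]
        rw [he, hr, hcomm, hzt, ← hφadd]
      intro s
      ext y
      constructor
      · rintro ⟨x, ⟨t, rfl⟩, rfl⟩
        obtain ⟨r, hr⟩ := hA s
        refine ⟨t + r, ?_⟩
        show φ (t + r) p = ψ s (φ t p)
        rw [hφadd, ← hr, ← hcomm]
      · rintro ⟨t, rfl⟩
        obtain ⟨r, hr⟩ := hA (-s)
        refine ⟨φ (t + r) p, ⟨t + r, rfl⟩, ?_⟩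
        have h1 : φ (t + r) p = ψ (-s) (φ t p) := by rw [hφadd, ← hr, ← hcomm]
        rw [h1, ← hψadd, add_neg_cancel, hψ0]
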